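/- Let K be an algebraically closed field equipped with a multiplicative nonarchimedean (ultrametric) absolute value ‖·‖. Fix an integer d ≥ 2 with ‖(d : K)‖ = 1 and λ ∈ K with ‖λ‖ > 1, let f_λ(z) := z^d + λ, and for n ≥ 1 let P_n := {z ∈ K : f_λ^{∘n}(z) = z} be the (finite, cardinality d^n) set of fixed points of the n-fold iterate. Then ∑_{z∈P_n} ∑_{w∈P_n, w≠z} log‖z − w‖ = n · d^n · ((d−1)/d) · log‖λ‖. -/

import Mathlib

open Polynomial Finset

section Aux

variable {K : Type*} [NormedField K]

/-- Ultrametric: if `‖b‖ < ‖a‖` then `‖a + b‖ = ‖a‖`. -/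
lemma fekete_aux_norm_add_eq_left (hu : ∀ x y : K, ‖x + y‖ ≤ max ‖x‖ ‖y‖)
    {a b : K} (h : ‖b‖ < ‖a‖) : ‖a + b‖ = ‖a‖ := by
  refine le_antisymm ((hu a b).trans (max_le le_rfl h.le)) ?_
  have h2 : ‖a‖ ≤ max ‖a + b‖ ‖b‖ := by
    have := hu (a + b) (-b)
    simpa using this
  rcases le_max_iff.mp h2 with h3 | h3
  · exact h3
  · exact absurd (h3.trans_lt h) (lt_irrefl _)

/-- One escape step. -/
lemma fekete_aux_step (hu : ∀ x y : K, ‖x + y‖ ≤ max ‖x‖ ‖y‖)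
    {d : ℕ} (hd : 2 ≤ d) {lam : K} (hlam : 1 < ‖lam‖) {x : K}
    (hx : ‖lam‖ < ‖x‖ ^ d) :
    ‖x‖ < ‖x ^ d + lam‖ ∧ ‖lam‖ < ‖x ^ d + lam‖ ^ d := by
  have h1 : 1 < ‖x‖ := by
    by_contra h
    push_neg at h
    exact absurd (hx.trans_le (pow_le_one₀ (norm_nonneg x) h)) (not_lt.mpr hlam.le)
  have he : ‖x ^ d + lam‖ = ‖x‖ ^ d := by
    rw [← norm_pow]
    exact fekete_aux_norm_add_eq_left hu (by rwa [norm_pow])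
  constructor
  · rw [he]
    calc ‖x‖ = ‖x‖ ^ 1 := (pow_one _).symm
    _ < ‖x‖ ^ d := pow_lt_pow_right₀ h1 (by omega)
  · rw [he, ← pow_mul]
    calc ‖lam‖ < ‖x‖ ^ d := hx
    _ ≤ ‖x‖ ^ (d * d) := pow_le_pow_right₀ h1.le (Nat.le_mul_of_pos_left d (by omega))

/-- Escape lemma: points with `‖x‖^d > ‖lam‖` strictly grow under iteration. -/
lemma fekete_aux_escape (hu : ∀ x y : K, ‖x + y‖ ≤ max ‖x‖ ‖y‖)
    {d : ℕ} (hd : 2 ≤ d) {lam : K} (hlam : 1 < ‖lam‖) :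
    ∀ (m : ℕ) (x : K), ‖lam‖ < ‖x‖ ^ d →
      ‖x‖ < ‖(fun w : K => w ^ d + lam)^[m + 1] x‖ ∧
      ‖lam‖ < ‖(fun w : K => w ^ d + lam)^[m + 1] x‖ ^ d := by
  intro m
  induction m with
  | zero =>
    intro x hx
    simpa using fekete_aux_step hu hd hlam hx
  | succ m ih =>
    intro x hx
    obtain ⟨h1, h2⟩ := ih x hx
    have hs := fekete_aux_step hu hd hlam h2
    rw [Function.iterate_succ_apply' (fun w : K => w ^ d + lam) (m + 1) x]
    exact ⟨h1.trans hs.1, hs.2⟩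

/-- Periodic points of `f(z) = z^d + lam` satisfy `‖z‖^d = ‖lam‖`. -/
lemma fekete_aux_periodic_norm (hu : ∀ x y : K, ‖x + y‖ ≤ max ‖x‖ ‖y‖)
    {d : ℕ} (hd : 2 ≤ d) {lam : K} (hlam : 1 < ‖lam‖) {n : ℕ} (hn : 1 ≤ n)
    {x : K} (hx : (fun w : K => w ^ d + lam)^[n] x = x) : ‖x‖ ^ d = ‖lam‖ := by
  set f : K → K := fun w => w ^ d + lam with hf
  rcases lt_trichotomy (‖x‖ ^ d) ‖lam‖ with h | h | h
  · exfalso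
    set y : K := f x with hy
    have hynorm : ‖y‖ = ‖lam‖ := by
      have : y = lam + x ^ d := by rw [hy]; simp [hf, add_comm]
      rw [this]
      exact fekete_aux_norm_add_eq_left hu (by rwa [norm_pow])
    have hylam : ‖lam‖ < ‖y‖ ^ d := by
      rw [hynorm]
      calc ‖lam‖ = ‖lam‖ ^ 1 := (pow_one _).symm
      _ < ‖lam‖ ^ d := pow_lt_pow_right₀ hlam (by omega)
    have hyper : f^[n] y = y := by
      rw [hy, ← Function.iterate_succ_apply, Function.iterate_succ_apply', hx]
    obtain ⟨h1, _⟩ := fekete_aux_escape hu hd hlam (n - 1) y hylam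
    rw [Nat.sub_add_cancel hn, hyper] at h1
    exact lt_irrefl _ h1
  · exact h
  · exfalso
    obtain ⟨h1, _⟩ := fekete_aux_escape hu hd hlam (n - 1) x h
    rw [Nat.sub_add_cancel hn, hx] at h1
    exact lt_irrefl _ h1

/-- The polynomial realizing the `n`-fold iterate of `z ↦ z^d + lam`. -/
noncomputable def feketeIterPoly (d : ℕ) (lam : K) : ℕ → Polynomial K
  | 0 => X
  | n + 1 => (feketeIterPoly d lam n).comp (X ^ d + C lam)

lemma feketeIterPoly_eval (d : ℕ) (lam : K) :
    ∀ (n : ℕ) (z : K), (feketeIterPoly d lam n).eval z = (fun w : K => w ^ d + lam)^[n] z := by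
  intro n
  induction n with
  | zero => intro z; simp [feketeIterPoly]
  | succ n ih =>
    intro z
    rw [feketeIterPoly, eval_comp, Function.iterate_succ_apply]
    simp only [eval_add, eval_pow, eval_X, eval_C]
    exact ih (z ^ d + lam)

lemma feketeIterPoly_monic_natDegree {d : ℕ} (hd : 2 ≤ d) (lam : K) :
    ∀ n : ℕ, (feketeIterPoly d lam n).Monic ∧ (feketeIterPoly d lam n).natDegree = d ^ n := by
  have hqm : (X ^ d + C lam : Polynomial K).Monic :=
    monic_X_pow_add (degree_C_le.trans_lt (by exact_mod_cast Nat.cast_pos.mpr (by omega)))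
  have hqd : (X ^ d + C lam : Polynomial K).natDegree = d := natDegree_X_pow_add_C
  intro n
  induction n with
  | zero => exact ⟨monic_X, natDegree_X⟩
  | succ n ih =>
    obtain ⟨hm, hdeg⟩ := ih
    refine ⟨hm.comp hqm (by omega), ?_⟩
    rw [feketeIterPoly, natDegree_comp, hdeg, hqd, pow_succ]

lemma feketeIterPoly_deriv_eval {d : ℕ} (hd : 2 ≤ d) (lam : K) :
    ∀ (n : ℕ) (z : K), ((feketeIterPoly d lam n).derivative).eval z
      = ∏ k ∈ Finset.range n, ((d : K) * ((fun w : K => w ^ d + lam)^[k] z) ^ (d - 1)) := by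
  intro n
  induction n with
  | zero => intro z; simp [feketeIterPoly]
  | succ n ih =>
    intro z
    rw [feketeIterPoly, derivative_comp, eval_mul, eval_comp]
    have hq : (derivative (X ^ d + C lam : Polynomial K)).eval z = (d : K) * z ^ (d - 1) := by
      simp [derivative_X_pow]
    simp only [eval_add, eval_pow, eval_X, eval_C] at hq ⊢
    rw [hq, ih (z ^ d + lam), Finset.prod_range_succ']
    simp only [Function.iterate_succ_apply, Function.iterate_zero_apply]
    ring

end Aux



/-- The Fekete-sum computation of Section 5: for the set `P_n` (of cardinality `d^n`)
of fixed points of the `n`-fold iterate of `f_λ(z) = z^d + λ` (`d ≥ 2`, `‖(d:K)‖ = 1`,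
`‖λ‖ > 1`, `K` algebraically closed nonarchimedean),
`∑_{z∈P_n} ∑_{w∈P_n, w≠z} log‖z−w‖ = n·d^n·((d−1)/d)·log‖λ‖`. -/
theorem fekete_sum_periodic_points {K : Type*} [NormedField K] [IsAlgClosed K]
    [DecidableEq K]
    (hultra : ∀ x y : K, ‖x + y‖ ≤ max ‖x‖ ‖y‖)
    (d : ℕ) (hd : 2 ≤ d) (hdnorm : ‖(d : K)‖ = 1)
    (lam : K) (hlam : 1 < ‖lam‖) (n : ℕ) (hn : 1 ≤ n)
    (P : Finset K) (hP : ∀ z : K, z ∈ P ↔ (fun w : K => w ^ d + lam)^[n] z = z)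
    (hcard : P.card = d ^ n) :
    ∑ z ∈ P, ∑ w ∈ P.erase z, Real.log ‖z - w‖
      = (n : ℝ) * (d : ℝ) ^ n * (((d : ℝ) - 1) / d) * Real.log ‖lam‖ := by
  classical
  obtain ⟨hm, hdeg⟩ := feketeIterPoly_monic_natDegree (K := K) hd lam n
  set p : Polynomial K := feketeIterPoly d lam n - X with hp
  have hdn2 : 2 ≤ d ^ n := hd.trans (Nat.le_self_pow (by omega) d)
  have hdegX : (X : Polynomial K).degree < (feketeIterPoly d lam n).degree := by
    rw [degree_X, degree_eq_natDegree hm.ne_zero, hdeg]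
    exact_mod_cast Nat.one_lt_cast.mpr (by omega : 1 < d ^ n)
  have hpm : p.Monic := hm.sub_of_left hdegX
  have hpdegree : p.degree = (d ^ n : ℕ) := by
    rw [hp, degree_sub_eq_left_of_degree_lt hdegX, degree_eq_natDegree hm.ne_zero, hdeg]
  have hpdeg : p.natDegree = d ^ n := natDegree_eq_of_degree_eq_some hpdegree
  have hsplits : Splits p := IsAlgClosed.splits p
  have hrootscard : Multiset.card p.roots = d ^ n := by
    rw [← hpdeg]; exact (splits_iff_card_roots.mp hsplits)
  have hevalp : ∀ z : K, p.eval z = (fun w : K => w ^ d + lam)^[n] z - z := by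
    intro z; rw [hp]; simp [feketeIterPoly_eval]
  have hPle : P.val ≤ p.roots := by
    rw [Multiset.le_iff_count]
    intro a
    by_cases ha : a ∈ P
    · rw [Multiset.count_eq_one_of_mem P.nodup ha]
      refine Multiset.one_le_count_iff_mem.mpr ?_
      rw [mem_roots hpm.ne_zero]
      show p.eval a = 0
      rw [hevalp a, (hP a).mp ha, sub_self]
    · rw [Multiset.count_eq_zero.mpr (by simpa using ha)]
      exact Nat.zero_le _
  have hroots_eq : p.roots = P.val := by
    refine (Multiset.eq_of_le_of_card_le hPle ?_).symm
    rw [hrootscard]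
    exact le_of_eq (by rw [← hcard]; rfl)
  have hfact : p = ∏ w ∈ P, (X - C w) := by
    have h := hsplits.eq_prod_roots_of_monic hpm
    rw [hroots_eq] at h
    exact h
  -- per-point computation
  have hkey : ∀ z ∈ P, ∑ w ∈ P.erase z, Real.log ‖z - w‖
      = ((n * (d - 1) : ℕ) : ℝ) / d * Real.log ‖lam‖ := by
    intro z hz
    set Dz : K := ((feketeIterPoly d lam n).derivative).eval z with hDzdef
    have horb : ∀ k : ℕ, (fun w : K => w ^ d + lam)^[k] z ∈ P := by
      intro k
      rw [hP]
      rw [← Function.iterate_add_apply, Nat.add_comm, Function.iterate_add_apply,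
        (hP z).mp hz]
    have hnormk : ∀ k : ℕ, ‖(fun w : K => w ^ d + lam)^[k] z‖ ^ d = ‖lam‖ := fun k =>
      fekete_aux_periodic_norm hultra hd hlam hn ((hP _).mp (horb k))
    -- identification of the product with Dz - 1
    have e1 : p.derivative.eval z = Dz - 1 := by
      rw [hp]; simp [hDzdef]
    have e2 : p.derivative.eval z = ∏ w ∈ P.erase z, (z - w) := by
      rw [hfact, ← Finset.mul_prod_erase P _ hz, derivative_mul, derivative_X_sub_C]
      simp [eval_prod]
    have hprod_eq : ∏ w ∈ P.erase z, (z - w) = Dz - 1 := by rw [← e2, e1]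
    -- norm computations
    have hDz : ‖Dz‖ = ∏ k ∈ Finset.range n, ‖(fun w : K => w ^ d + lam)^[k] z‖ ^ (d - 1) := by
      rw [hDzdef, feketeIterPoly_deriv_eval hd lam n z, norm_prod]
      refine Finset.prod_congr rfl fun k _ => ?_
      rw [norm_mul, hdnorm, one_mul, norm_pow]
    have hDzd : ‖Dz‖ ^ d = ‖lam‖ ^ (n * (d - 1)) := by
      rw [hDz, ← Finset.prod_pow]
      have : ∀ k ∈ Finset.range n,
          (‖(fun w : K => w ^ d + lam)^[k] z‖ ^ (d - 1)) ^ d = ‖lam‖ ^ (d - 1) := by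
        intro k _
        rw [← pow_mul, Nat.mul_comm, pow_mul, hnormk k]
      rw [Finset.prod_congr rfl this, Finset.prod_const, Finset.card_range, ← pow_mul,
        Nat.mul_comm]
    have h1lt : 1 < ‖Dz‖ := by
      by_contra h
      push_neg at h
      have h2 : ‖Dz‖ ^ d ≤ 1 := pow_le_one₀ (norm_nonneg _) h
      rw [hDzd] at h2
      exact absurd (one_lt_pow₀ hlam (Nat.mul_ne_zero (by omega) (by omega))) (not_lt.mpr h2)
    have hsub : ‖Dz - 1‖ = ‖Dz‖ := by
      have hr : Dz - 1 = Dz + (-1) := by ring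
      rw [hr, fekete_aux_norm_add_eq_left hultra (by simpa using h1lt)]
    have hlog : (d : ℝ) * Real.log ‖Dz‖ = ((n * (d - 1) : ℕ) : ℝ) * Real.log ‖lam‖ := by
      have := congrArg Real.log hDzd
      rwa [Real.log_pow, Real.log_pow] at this
    have hlogDz : Real.log ‖Dz‖ = ((n * (d - 1) : ℕ) : ℝ) / d * Real.log ‖lam‖ := by
      have hd0 : (d : ℝ) ≠ 0 := by positivity
      rw [div_mul_eq_mul_div, eq_div_iff hd0]
      linarith [hlog]
    calc ∑ w ∈ P.erase z, Real.log ‖z - w‖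
        = Real.log (∏ w ∈ P.erase z, ‖z - w‖) := by
          rw [Real.log_prod]
          intro w hw
          have : w ≠ z := Finset.ne_of_mem_erase hw
          simp [sub_eq_zero, this.symm]
      _ = Real.log ‖∏ w ∈ P.erase z, (z - w)‖ := by rw [norm_prod]
      _ = Real.log ‖Dz‖ := by rw [hprod_eq, hsub]
      _ = _ := hlogDz
  rw [Finset.sum_congr rfl hkey, Finset.sum_const, hcard, nsmul_eq_mul]
  have hcast : ((n * (d - 1) : ℕ) : ℝ) = (n : ℝ) * ((d : ℝ) - 1) := by
    push_cast [Nat.cast_sub (by omega : 1 ≤ d)]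
    ring
  rw [hcast]
  push_cast
  ring
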